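/- Let V be a finite-dimensional real inner product space (e.g., Euclidean space ℝⁿ), λ > 0 and u ∈ V. Then the block soft-thresholding value T_λ(u), defined by T_λ(u) = 0 if ‖u‖ ≤ λ and T_λ(u) = u·(1 − λ/‖u‖) if ‖u‖ > λ, is the unique minimizer over a ∈ V of the function f(a) = (1/2)‖u − a‖² + λ‖a‖. -/

import Mathlib

/-- In a finite-dimensional real inner product space, for `λ > 0`
and `u`, the block soft-thresholding value `T_λ(u)` (zero if `‖u‖ ≤ λ` and
`(1 − λ/‖u‖)·u` if `‖u‖ > λ`) is the unique minimizer over `a` of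
`f(a) = (1/2)‖u − a‖² + λ‖a‖`. -/
theorem block_soft_threshold_unique_minimizer {V : Type*}
    [NormedAddCommGroup V] [InnerProductSpace ℝ V] [FiniteDimensional ℝ V]
    (lam : ℝ) (hlam : 0 < lam) (u : V)
    (T : V) (hT : T = if ‖u‖ ≤ lam then 0 else (1 - lam / ‖u‖) • u) :
    ∀ a : V, a ≠ T →
      (1/2) * ‖u - T‖^2 + lam * ‖T‖ < (1/2) * ‖u - a‖^2 + lam * ‖a‖ := by
  intro a ha
  have key2 : ‖u - a‖^2 = ‖u‖^2 - 2*inner ℝ u a + ‖a‖^2 := norm_sub_sq_real u a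
  have hCS : inner ℝ u a ≤ ‖u‖ * ‖a‖ := real_inner_le_norm u a
  by_cases h : ‖u‖ ≤ lam
  · rw [if_pos h] at hT
    subst hT
    have ha0 : 0 < ‖a‖ := norm_pos_iff.mpr ha
    have hua : inner ℝ u a ≤ lam * ‖a‖ := hCS.trans (by nlinarith)
    rw [key2]
    simp only [sub_zero, norm_zero]
    nlinarith [sq_nonneg ‖a‖]
  · rw [if_neg h] at hT
    push_neg at h
    set c : ℝ := 1 - lam / ‖u‖ with hc
    have hu : 0 < ‖u‖ := hlam.trans h
    have hc0 : 0 < c := by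
      rw [hc, sub_pos, div_lt_one hu]; exact h
    have hlc : lam = (1 - c) * ‖u‖ := by
      rw [hc, sub_sub_cancel, div_mul_cancel₀ _ hu.ne']
    clear_value c
    have hTn : ‖T‖ = c * ‖u‖ := by
      rw [hT, norm_smul, Real.norm_eq_abs, abs_of_pos hc0]
    have hTi : ‖u - T‖^2 = ‖u‖^2 - 2*(c*‖u‖^2) + (c*‖u‖)^2 := by
      rw [norm_sub_sq_real, hT, real_inner_smul_right, real_inner_self_eq_norm_sq, ← hT, hTn]
    rw [key2, hTi, hTn]
    by_cases heq : inner ℝ u a = ‖u‖ * ‖a‖ ∧ ‖a‖ = c * ‖u‖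
    · exfalso
      obtain ⟨h1, h2⟩ := heq
      have hcs : ‖a‖ • u = ‖u‖ • a := (inner_eq_norm_mul_iff_real (x := u) (y := a)).mp h1
      have hcoef : ‖u‖⁻¹ * ‖a‖ = c := by
        rw [h2]; field_simp
      apply ha
      calc a = ‖u‖⁻¹ • (‖u‖ • a) := by
              rw [smul_smul, inv_mul_cancel₀ hu.ne', one_smul]
        _ = ‖u‖⁻¹ • (‖a‖ • u) := by rw [hcs]
        _ = (‖u‖⁻¹ * ‖a‖) • u := smul_smul _ _ _
        _ = c • u := by rw [hcoef]
        _ = T := hT.symm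
    · push_neg at heq
      rw [hlc]
      by_cases h1 : inner ℝ u a = ‖u‖ * ‖a‖
      · have h2 := heq h1
        have hpos : (‖a‖ - c*‖u‖)^2 > 0 := by
          have := sub_ne_zero.mpr h2
          positivity
        rw [h1]
        nlinarith [hpos]
      · have h1' : (inner ℝ u a : ℝ) < ‖u‖ * ‖a‖ := lt_of_le_of_ne hCS h1
        nlinarith [sq_nonneg (‖a‖ - c*‖u‖), norm_nonneg a]
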